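/- Let M ⊆ ℝⁿ be a proper (i.e., closed in ℝⁿ) m-dimensional real-analytic submanifold, and let γ : ℝ → ℝⁿ be a real-analytic curve. If there exists ε > 0 such that γ(t) ∈ M for all t ∈ (−ε, ε), then γ(t) ∈ M for all t ∈ ℝ. -/

import Mathlib

/-- `M ⊆ ℝⁿ` is an `m`-dimensional real-analytic submanifold: around every point of `M`
there is an open set `U` and a real-analytic map `f : U → ℝ^(n-m)` with surjective
derivative at every point of `U` such that `M ∩ U = {x ∈ U | f x = 0}`. -/
def IsAnalyticSubmanifold {n : ℕ} (m : ℕ) (M : Set (EuclideanSpace ℝ (Fin n))) : Prop :=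
  ∀ p ∈ M, ∃ U : Set (EuclideanSpace ℝ (Fin n)), IsOpen U ∧ p ∈ U ∧
    ∃ f : EuclideanSpace ℝ (Fin n) → EuclideanSpace ℝ (Fin (n - m)),
      AnalyticOnNhd ℝ f U ∧ (∀ x ∈ U, Function.Surjective (fderiv ℝ f x)) ∧
      M ∩ U = {x ∈ U | f x = 0}

/-- If `M ⊆ ℝⁿ` is a proper (closed) `m`-dimensional real-analytic submanifold and
`γ : ℝ → ℝⁿ` is a real-analytic curve lying in `M` on some interval `(−ε, ε)`, then
`γ` lies in `M` for all time. -/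
theorem analytic_curve_propagation {n m : ℕ} (hmn : m ≤ n)
    (M : Set (EuclideanSpace ℝ (Fin n))) (hMclosed : IsClosed M)
    (hM : IsAnalyticSubmanifold m M)
    (γ : ℝ → EuclideanSpace ℝ (Fin n)) (hγ : AnalyticOnNhd ℝ γ Set.univ)
    (ε : ℝ) (hε : 0 < ε) (h : ∀ t ∈ Set.Ioo (-ε) ε, γ t ∈ M) :
    ∀ t : ℝ, γ t ∈ M := by
  have hγc : Continuous γ := by
    rw [← continuousOn_univ]
    exact hγ.continuousOn
  set S : Set ℝ := γ ⁻¹' M with hS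
  have hSclosed : IsClosed S := hMclosed.preimage hγc
  set O : Set ℝ := interior S with hO
  have hOS : O ⊆ S := interior_subset
  -- O is closed
  have hOclosed : IsClosed O := by
    rw [← closure_subset_iff_isClosed]
    intro t ht
    have htS : t ∈ S := hSclosed.closure_subset (closure_mono hOS ht)
    obtain ⟨U, hUopen, hpU, f, hf, hsurj, hMU⟩ := hM (γ t) htS
    set V : Set ℝ := γ ⁻¹' U with hV
    have hVopen : IsOpen V := hUopen.preimage hγc
    have htV : t ∈ V := hpU
    set C : Set ℝ := connectedComponentIn V t with hC
    have hCopen : IsOpen C := hVopen.connectedComponentIn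
    have htC : t ∈ C := mem_connectedComponentIn htV
    have hCV : C ⊆ V := connectedComponentIn_subset V t
    -- find a point in C ∩ O
    obtain ⟨w, hwC, hwO⟩ : (C ∩ O).Nonempty := by
      rw [mem_closure_iff_nhds] at ht
      exact ht C (hCopen.mem_nhds htC)
    -- g vanishes on O ∩ C
    have hg0 : ∀ s ∈ O ∩ C, f (γ s) = 0 := by
      intro s ⟨hsO, hsC⟩
      have : γ s ∈ M ∩ U := ⟨hOS hsO, hCV hsC⟩
      rw [hMU] at this
      exact this.2
    have hganal : AnalyticOnNhd ℝ (f ∘ γ) C := fun s hsC =>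
      (hf (γ s) (hCV hsC)).comp (hγ s (Set.mem_univ s))
    have heq : Set.EqOn (f ∘ γ) 0 C := by
      apply hganal.eqOn_zero_of_preconnected_of_eventuallyEq_zero
        (isPreconnected_connectedComponentIn) hwC
      filter_upwards [ (isOpen_interior.inter hCopen).mem_nhds ⟨hwO, hwC⟩] with s hs
      exact hg0 s ⟨hs.1, hs.2⟩
    have hCS : C ⊆ S := by
      intro s hsC
      have : γ s ∈ M ∩ U := by
        rw [hMU]
        exact ⟨hCV hsC, heq hsC⟩
      exact this.1
    exact interior_maximal hCS hCopen htC
  have hOne : O.Nonempty := ⟨0, interior_maximal (fun s hs => h s hs) isOpen_Ioo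
    (by constructor <;> simp [hε, neg_lt_zero.mpr hε])⟩
  have : O = Set.univ := (IsClopen.eq_univ ⟨hOclosed, isOpen_interior⟩ hOne)
  intro t
  exact hOS (this ▸ Set.mem_univ t)
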